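/- The sequence s(n) = (1/2) · C(2n, n) (for n ≥ 1) is not MC-finite; in fact n ↦ s(n) mod 2 is not eventually periodic, since s(n) is odd if and only if n is a power of 2. -/

import Mathlib

private instance : Fact (Nat.Prime 2) := ⟨Nat.prime_two⟩

/-- Parity of the middle binomial coefficient: `C(m, ⌊m/2⌋)` is odd iff `m + 1` is a power of 2. -/
private lemma middle_choose_odd : ∀ m : ℕ, (m.choose (m / 2)) % 2 = 1 ↔ ∃ t : ℕ, m + 1 = 2 ^ t := by
  intro m
  induction m using Nat.strong_induction_on with
  | _ m ih =>
    rcases Nat.eq_zero_or_pos m with rfl | hm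
    · simp [Nat.choose]
      exact ⟨0, rfl⟩
    have lucas := Choose.choose_modEq_choose_mod_mul_choose_div_nat (p := 2) (n := m) (k := m / 2)
    have key : m.choose (m / 2) % 2
        = ((m % 2).choose (m / 2 % 2) * (m / 2).choose (m / 2 / 2)) % 2 := lucas
    rcases Nat.even_or_odd m with he | ho
    · -- m even, m ≥ 1 : both sides false
      obtain ⟨q, rfl⟩ := he
      have hq : 0 < q := by omega
      have hm2 : (q + q) % 2 = 0 := by omega
      have hd : (q + q) / 2 = q := by omega
      constructor
      · intro h
        rw [key, hm2, hd] at h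
        rcases Nat.even_or_odd q with hqe | hqo
        · -- q even: choose 0 (q % 2) = 1, reduces to IH at q, which is false
          have hq2 : q % 2 = 0 := Nat.even_iff.mp hqe
          rw [hq2] at h
          simp only [Nat.choose_self, one_mul] at h
          have := (ih q (by omega)).mp h
          obtain ⟨t, ht⟩ := this
          -- q + 1 = 2 ^ t with q even and q ≥ 1 : impossible
          rcases Nat.eq_zero_or_pos t with rfl | htp
          · omega
          · have : 2 ∣ 2 ^ t := dvd_pow_self 2 (by omega)
            omega
        · have hq2 : q % 2 = 1 := Nat.odd_iff.mp hqo
          rw [hq2] at h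
          simp [Nat.choose] at h
      · rintro ⟨t, ht⟩
        rcases Nat.eq_zero_or_pos t with rfl | htp
        · omega
        · have : 2 ∣ 2 ^ t := dvd_pow_self 2 (by omega)
          omega
    · -- m odd: m = 2q+1, reduces to IH at q
      obtain ⟨q, rfl⟩ := ho
      have hm2 : (2 * q + 1) % 2 = 1 := by omega
      have hd : (2 * q + 1) / 2 = q := by omega
      rw [key, hm2, hd]
      have hone : Nat.choose 1 (q % 2) = 1 := by
        rcases Nat.mod_two_eq_zero_or_one q with h | h <;> simp [h]
      rw [hone, one_mul]
      rw [ih q (by omega)]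
      constructor
      · rintro ⟨t, ht⟩
        refine ⟨t + 1, by rw [pow_succ]; omega⟩
      · rintro ⟨t, ht⟩
        rcases Nat.eq_zero_or_pos t with rfl | htp
        · omega
        · obtain ⟨u, rfl⟩ := Nat.exists_eq_add_of_lt htp
          refine ⟨u, ?_⟩
          simp only [pow_succ, zero_add] at ht
          omega

private lemma s_odd_iff (k : ℕ) :
    ((2 * (k + 1)).choose (k + 1) / 2) % 2 = 1 ↔ ∃ m : ℕ, k + 1 = 2 ^ m := by
  have hid : (2 * (k + 1)).choose (k + 1) = 2 * (2 * k + 1).choose k := by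
    have h1 : 2 * (k + 1) = (2 * k + 1) + 1 := by ring
    rw [h1, Nat.choose_succ_succ']
    have h2 : (2 * k + 1).choose (k + 1) = (2 * k + 1).choose k := by
      rw [← Nat.choose_symm (by omega)]
      congr 1
      omega
    omega
  rw [hid, Nat.mul_div_cancel_left _ (by norm_num)]
  have lucas := Choose.choose_modEq_choose_mod_mul_choose_div_nat
    (p := 2) (n := 2 * k + 1) (k := k)
  have key : (2 * k + 1).choose k % 2
      = (((2 * k + 1) % 2).choose (k % 2) * ((2 * k + 1) / 2).choose (k / 2)) % 2 := lucas
  have hm2 : (2 * k + 1) % 2 = 1 := by omega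
  have hd : (2 * k + 1) / 2 = k := by omega
  have hone : Nat.choose 1 (k % 2) = 1 := by
    rcases Nat.mod_two_eq_zero_or_one k with h | h <;> simp [h]
  rw [key, hm2, hd, hone, one_mul]
  exact middle_choose_odd k

theorem stmt_7 (s : ℕ → ℕ) (hs : ∀ n, s n = (2 * n).choose n / 2) :
    (∀ n ≥ 1, (s n % 2 = 1 ↔ ∃ m : ℕ, n = 2 ^ m)) ∧
    ¬ ∃ N p : ℕ, 1 ≤ p ∧ ∀ n ≥ N, s (n + p) % 2 = s n % 2 := by
  have part1 : ∀ n ≥ 1, (s n % 2 = 1 ↔ ∃ m : ℕ, n = 2 ^ m) := by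
    intro n hn
    obtain ⟨k, rfl⟩ : ∃ k, n = k + 1 := ⟨n - 1, by omega⟩
    rw [hs]
    exact s_odd_iff k
  refine ⟨part1, ?_⟩
  rintro ⟨N, p, hp, hper⟩
  set n0 := 2 ^ (N + p) with hn0
  have hn0N : N ≤ n0 := le_trans (by omega) (Nat.le_of_lt (Nat.lt_two_pow_self (n := N + p)))
  have hn0p : p < n0 := lt_of_le_of_lt (by omega) (Nat.lt_two_pow_self (n := N + p))
  have h1 : s n0 % 2 = 1 := (part1 n0 (Nat.one_le_two_pow)).mpr ⟨N + p, rfl⟩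
  have h2 : s (n0 + p) % 2 = 1 := by rw [hper n0 hn0N]; exact h1
  obtain ⟨j, hj⟩ := (part1 (n0 + p) (by omega)).mp h2
  have hlt : n0 < 2 ^ j := by omega
  have hlt2 : 2 ^ j < 2 ^ (N + p + 1) := by
    rw [pow_succ]
    omega
  have hj1 : N + p < j := (Nat.pow_lt_pow_iff_right (by norm_num)).mp hlt
  have hj2 : j < N + p + 1 := (Nat.pow_lt_pow_iff_right (by norm_num)).mp hlt2
  omega
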